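/- Let a > 0 and let A : ℝ^{n_z} → Mat_{n_x}(ℝ) and B : ℝ^{n_z} → Mat_{n_y}(ℝ) be matrix-valued functions satisfying ⟨A(z)x, x⟩ ≥ a‖x‖² and ⟨B(z)y, y⟩ ≥ a‖y‖² for all z,x,y. Let ρ_x, ρ_y ≥ 0 and let (z,x,y) : ℝ → ℝ^{n_z}×ℝ^{n_x}×ℝ^{n_y} be a C¹ curve, defined for all t ∈ ℝ, satisfying ‖x(t)‖ < 1 and ‖y(t)‖ < 1 for all t, and x'(t) = A(z(t))x(t) + R_x(t), y'(t) = −B(z(t))y(t) + R_y(t) with ‖R_x(t)‖ ≤ ρ_x and ‖R_y(t)‖ ≤ ρ_y for all t. Then ‖x(t)‖ ≤ 2ρ_x/a and ‖y(t)‖ ≤ 2ρ_y/a for all t ∈ ℝ. (This is the localization estimate of the normally hyperbolic graph theorem: any complete orbit of the perturbed slow–fast system staying in the unit domain has hyperbolic coordinates of size at most (2/a) times the size of the perturbation.) -/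

import Mathlib

open RealInnerProductSpace Set Filter

/-- If `f t0 ≥ c` and `f' ≥ ε > 0` whenever `f ≥ c` (for `t ≥ t0`), then `f ≥ c` forward. -/
lemma forward_ge (f f' : ℝ → ℝ) (hf : ∀ t, HasDerivAt f (f' t) t)
    (t0 c ε : ℝ) (hε : 0 < ε) (h0 : c ≤ f t0)
    (hinv : ∀ t, t0 ≤ t → c ≤ f t → ε ≤ f' t) :
    ∀ t, t0 ≤ t → c ≤ f t := by
  have hcont : Continuous f := continuous_iff_continuousAt.2 fun t => (hf t).continuousAt
  intro t1 ht1
  by_contra hlt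
  push_neg at hlt
  have ht01 : t0 < t1 := lt_of_le_of_ne ht1 (by rintro rfl; exact absurd h0 (not_le.2 hlt))
  set S : Set ℝ := Icc t0 t1 ∩ f ⁻¹' (Ici c) with hS
  have hSne : S.Nonempty := ⟨t0, ⟨le_refl _, le_of_lt ht01⟩, h0⟩
  have hSbdd : BddAbove S := ⟨t1, fun s hs => hs.1.2⟩
  have hSclosed : IsClosed S := isClosed_Icc.inter (isClosed_Ici.preimage hcont)
  set T := sSup S with hT
  have hTS : T ∈ S := hSclosed.csSup_mem hSne hSbdd
  have hfT : c ≤ f T := hTS.2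
  have hTt1 : T < t1 := lt_of_le_of_ne hTS.1.2
    (fun h => absurd hfT (by rw [h]; exact not_le.2 hlt))
  have hderiv : ε ≤ f' T := hinv T hTS.1.1 hfT
  -- slope tendsto f' T along 𝓝[>] T
  have hslope : Tendsto (slope f T) (nhdsWithin T (Ioi T)) (nhds (f' T)) :=
    ((hasDerivAt_iff_tendsto_slope.1 (hf T)).mono_left
      (nhdsWithin_mono T (fun s hs => ne_of_gt hs)))
  have hpos : ∀ᶠ s in nhdsWithin T (Ioi T), 0 < slope f T s :=
    hslope.eventually (eventually_gt_nhds (lt_of_lt_of_le hε hderiv))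
  have hmem : ∀ᶠ s in nhdsWithin T (Ioi T), s ∈ Ioc T t1 :=
    Ioc_mem_nhdsGT_of_mem ⟨le_refl _, hTt1⟩
  obtain ⟨s, hspos, hsmem⟩ := (hpos.and hmem).exists
  have hsnotS : s ∉ S := fun h => absurd (le_csSup hSbdd h) (not_le.2 hsmem.1)
  have hfs : f s < c := by
    by_contra h
    exact hsnotS ⟨⟨le_trans hTS.1.1 (le_of_lt hsmem.1), hsmem.2⟩, le_of_not_gt h⟩
  have : slope f T s < 0 := by
    rw [slope_def_field]
    exact div_neg_of_neg_of_pos (by linarith) (by linarith [hsmem.1])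
  linarith

/-- No globally bounded solution can stay above the barrier. -/
lemma forward_blowup (f f' : ℝ → ℝ) (hf : ∀ t, HasDerivAt f (f' t) t)
    (t0 c ε : ℝ) (hε : 0 < ε) (h0 : c ≤ f t0)
    (hinv : ∀ t, t0 ≤ t → c ≤ f t → ε ≤ f' t)
    (hbd : ∀ t, f t < 1) : False := by
  have hge := forward_ge f f' hf t0 c ε hε h0 hinv
  set b := t0 + (1 - f t0) / ε + 1 with hb
  have hfb : (1 - f t0) / ε > 0 := div_pos (by linarith [hbd t0]) hε
  have htb : t0 < b := by rw [hb]; linarith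
  obtain ⟨ξ, hξ, hslope⟩ := exists_hasDerivAt_eq_slope f f' htb
    (Continuous.continuousOn (continuous_iff_continuousAt.2 fun t => (hf t).continuousAt))
    (fun s _ => hf s)
  have hξ0 : t0 ≤ ξ := le_of_lt hξ.1
  have hεξ : ε ≤ f' ξ := hinv ξ hξ0 (hge ξ hξ0)
  have hne : b - t0 ≠ 0 := sub_ne_zero.2 (ne_of_gt htb)
  have hval : f b - f t0 = f' ξ * (b - t0) := by
    rw [hslope, div_mul_cancel₀ _ hne]
  have h1 : ε * (b - t0) ≤ f' ξ * (b - t0) :=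
    mul_le_mul_of_nonneg_right hεξ (by linarith)
  have h2 : ε * (b - t0) = (1 - f t0) + ε := by
    rw [hb]; field_simp; ring
  have := hbd b
  linarith

/-- Vector form: expanding dynamics with bounded orbit implies localization. -/
lemma localization_estimate (n : ℕ) (a ρ : ℝ) (ha : 0 < a) (hρ : 0 ≤ ρ)
    (x v : ℝ → EuclideanSpace ℝ (Fin n))
    (hx : ∀ t, HasDerivAt x (v t) t)
    (hv : ∀ t, a * ‖x t‖ ^ 2 - ρ * ‖x t‖ ≤ ⟪v t, x t⟫)
    (hx1 : ∀ t, ‖x t‖ < 1) : ∀ t, ‖x t‖ ≤ 2 * ρ / a := by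
  intro t0
  by_contra hgt
  push_neg at hgt
  have hρa : 0 ≤ 2 * ρ / a := div_nonneg (by linarith) (le_of_lt ha)
  have hx0 : 0 < ‖x t0‖ := lt_of_le_of_lt hρa hgt
  set f : ℝ → ℝ := fun t => ⟪x t, x t⟫ with hfdef
  set f' : ℝ → ℝ := fun t => ⟪x t, v t⟫ + ⟪v t, x t⟫ with hf'def
  have hf : ∀ t, HasDerivAt f (f' t) t := fun t => (hx t).inner ℝ (hx t)
  have hfn : ∀ t, f t = ‖x t‖ ^ 2 := fun t => real_inner_self_eq_norm_sq (x t)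
  set c := ‖x t0‖ ^ 2 with hc
  have hcpos : 0 < c := by positivity
  refine forward_blowup f f' hf t0 c (a * c) (by positivity) ((hfn t0).ge) ?_ ?_
  · intro t _ hct
    have hct' : ‖x t0‖ ^ 2 ≤ ‖x t‖ ^ 2 := by rw [← hfn t]; exact hct
    have hnorm : ‖x t0‖ ≤ ‖x t‖ := by nlinarith [norm_nonneg (x t), norm_nonneg (x t0)]
    have h2ρ : 2 * ρ < ‖x t0‖ * a := (div_lt_iff₀ ha).1 hgt
    have hcomm : ⟪x t, v t⟫ = ⟪v t, x t⟫ := real_inner_comm _ _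
    show a * c ≤ ⟪x t, v t⟫ + ⟪v t, x t⟫
    rw [hcomm]
    nlinarith [hv t, h2ρ, hnorm, norm_nonneg (x t), norm_nonneg (x t0),
      mul_le_mul_of_nonneg_left hnorm ha.le]
  · intro t
    rw [hfn t]
    nlinarith [hx1 t, norm_nonneg (x t)]

/-- localization estimate for complete orbits of the perturbed
slow–fast system: if `x' = A(z)x + R_x`, `y' = -B(z)y + R_y` along a complete C¹ curve
`(z,x,y)` staying in the unit domain, with `⟨A(z)x,x⟩ ≥ a‖x‖²`, `⟨B(z)y,y⟩ ≥ a‖y‖²`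
and `‖R_x‖ ≤ ρ_x`, `‖R_y‖ ≤ ρ_y`, then `‖x(t)‖ ≤ 2ρ_x/a` and `‖y(t)‖ ≤ 2ρ_y/a`. -/
theorem normally_hyperbolic_localization
    (nz nx ny : ℕ) (a : ℝ) (ha : 0 < a)
    (A : EuclideanSpace ℝ (Fin nz) → Matrix (Fin nx) (Fin nx) ℝ)
    (B : EuclideanSpace ℝ (Fin nz) → Matrix (Fin ny) (Fin ny) ℝ)
    (hA : ∀ z x, a * ‖x‖ ^ 2 ≤ ⟪Matrix.toEuclideanLin (A z) x, x⟫)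
    (hB : ∀ z y, a * ‖y‖ ^ 2 ≤ ⟪Matrix.toEuclideanLin (B z) y, y⟫)
    (ρx ρy : ℝ) (hρx : 0 ≤ ρx) (hρy : 0 ≤ ρy)
    (z : ℝ → EuclideanSpace ℝ (Fin nz))
    (x : ℝ → EuclideanSpace ℝ (Fin nx))
    (y : ℝ → EuclideanSpace ℝ (Fin ny))
    (Rx : ℝ → EuclideanSpace ℝ (Fin nx))
    (Ry : ℝ → EuclideanSpace ℝ (Fin ny))
    (hz : Differentiable ℝ z)
    (hx : ∀ t : ℝ, HasDerivAt x (Matrix.toEuclideanLin (A (z t)) (x t) + Rx t) t)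
    (hy : ∀ t : ℝ, HasDerivAt y (-(Matrix.toEuclideanLin (B (z t)) (y t)) + Ry t) t)
    (hxRcont : Continuous Rx) (hyRcont : Continuous Ry)
    (hx1 : ∀ t : ℝ, ‖x t‖ < 1) (hy1 : ∀ t : ℝ, ‖y t‖ < 1)
    (hRx : ∀ t : ℝ, ‖Rx t‖ ≤ ρx) (hRy : ∀ t : ℝ, ‖Ry t‖ ≤ ρy) :
    (∀ t : ℝ, ‖x t‖ ≤ 2 * ρx / a) ∧ (∀ t : ℝ, ‖y t‖ ≤ 2 * ρy / a) := by
  constructor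
  · refine localization_estimate nx a ρx ha hρx x
      (fun t => Matrix.toEuclideanLin (A (z t)) (x t) + Rx t) hx ?_ hx1
    intro t
    rw [inner_add_left]
    have h1 := hA (z t) (x t)
    have h2 : |⟪Rx t, x t⟫| ≤ ‖Rx t‖ * ‖x t‖ := abs_real_inner_le_norm _ _
    have h3 : ‖Rx t‖ * ‖x t‖ ≤ ρx * ‖x t‖ :=
      mul_le_mul_of_nonneg_right (hRx t) (norm_nonneg _)
    have := abs_le.1 h2
    linarith [this.1, this.2]
  · have key : ∀ t : ℝ, ‖y (-t)‖ ≤ 2 * ρy / a := by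
      refine localization_estimate ny a ρy ha hρy (fun t => y (-t))
        (fun t => Matrix.toEuclideanLin (B (z (-t))) (y (-t)) - Ry (-t)) ?_ ?_
        (fun t => hy1 (-t))
      · intro t
        have hneg : HasDerivAt (fun s : ℝ => -s) (-1 : ℝ) t := by
          exact (hasDerivAt_id' t).neg
        have := (hy (-t)).scomp t hneg
        simpa [neg_add, smul_add, sub_eq_add_neg, Function.comp_def] using this
      · intro t
        rw [inner_sub_left]
        have h1 := hB (z (-t)) (y (-t))
        have h2 : |⟪Ry (-t), y (-t)⟫| ≤ ‖Ry (-t)‖ * ‖y (-t)‖ := abs_real_inner_le_norm _ _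
        have h3 : ‖Ry (-t)‖ * ‖y (-t)‖ ≤ ρy * ‖y (-t)‖ :=
          mul_le_mul_of_nonneg_right (hRy (-t)) (norm_nonneg _)
        have := abs_le.1 h2
        linarith [this.1, this.2]
    intro t
    simpa using key (-t)
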